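/- arXiv:0809.0733 — 6 statements merged into one kernel-verified Lean document; each statement's English description precedes it below -/
import Mathlib

section
/- Let C be a self-dual [24,12,10] code over F5 and let A5(C) = { (1/√5)·c : c ∈ ℤ^24, (c mod 5) ∈ C } ⊆ ℝ^24. Then every nonzero vector x ∈ A5(C) satisfies ⟨x,x⟩ ≥ 2; that is, A5(C) has minimum norm at least 2. -/
/-- If `C` is a self-dual `[24,12,10]` code over `𝔽₅`, then every nonzero vector of
the Construction A lattice `A₅(C) = { (1/√5)·c : c ∈ ℤ²⁴, (c mod 5) ∈ C }` has
norm at least `2`. -/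
theorem constructionA_min_norm_ge_two
    (C : Submodule (ZMod 5) (Fin 24 → ZMod 5))
    (hdim : Module.finrank (ZMod 5) C = 12)
    (hsd : ∀ x : Fin 24 → ZMod 5, x ∈ C ↔ ∀ c ∈ C, ∑ i, x i * c i = 0)
    (hlow : ∀ c ∈ C, c ≠ 0 → 10 ≤ hammingNorm c)
    (hex : ∃ c ∈ C, c ≠ 0 ∧ hammingNorm c = 10)
    (L : Set (Fin 24 → ℝ))
    (hL : L = {x | ∃ c : Fin 24 → ℤ,
        (fun i => (c i : ZMod 5)) ∈ C ∧ x = fun i => (c i : ℝ) / Real.sqrt 5})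
    (x : Fin 24 → ℝ) (hx : x ∈ L) (hx0 : x ≠ 0) :
    2 ≤ ∑ i, x i * x i := by
  subst hL
  obtain ⟨c, hcC, rfl⟩ := hx
  have h5pos : (0:ℝ) < Real.sqrt 5 := Real.sqrt_pos.2 (by norm_num)
  have hc0 : ∃ j, c j ≠ 0 := by
    by_contra h
    push_neg at h
    exact hx0 (funext fun i => by simp [h i])
  have hterm : ∀ i : Fin 24, c i ≠ 0 → (1:ℤ) ≤ c i * c i := by
    intro i hi
    have h1 : 1 ≤ |c i| := Int.one_le_abs hi
    calc (1:ℤ) = 1 * 1 := by ring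
      _ ≤ |c i| * |c i| := mul_le_mul h1 h1 (by norm_num) (by linarith)
      _ = c i * c i := abs_mul_abs_self _
  have key : (10:ℤ) ≤ ∑ i, c i * c i := by
    by_cases hbar : (fun i => (c i : ZMod 5)) = 0
    · obtain ⟨j, hj⟩ := hc0
      have hdvd : (5:ℤ) ∣ c j := by
        have := congrFun hbar j
        simpa [ZMod.intCast_zmod_eq_zero_iff_dvd] using this
      obtain ⟨k, hk⟩ := hdvd
      have hk0 : k ≠ 0 := by rintro rfl; simp [hk] at hj
      have h1 : (1:ℤ) ≤ k * k := by
        have h1 : 1 ≤ |k| := Int.one_le_abs hk0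
        calc (1:ℤ) = 1 * 1 := by ring
          _ ≤ |k| * |k| := mul_le_mul h1 h1 (by norm_num) (by linarith)
          _ = k * k := abs_mul_abs_self _
      have h25 : (10:ℤ) ≤ c j * c j := by rw [hk]; nlinarith
      calc (10:ℤ) ≤ c j * c j := h25
        _ ≤ ∑ i, c i * c i :=
          Finset.single_le_sum (f := fun i => c i * c i) (fun i _ => mul_self_nonneg _) (Finset.mem_univ j)
    · have hham : 10 ≤ hammingNorm (fun i => (c i : ZMod 5)) := hlow _ hcC hbar
      have hcard : 10 ≤ (Finset.univ.filter fun i => ((c i : ZMod 5)) ≠ 0).card := by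
        simpa [hammingNorm] using hham
      have h1 : (10:ℤ) ≤ ∑ i ∈ Finset.univ.filter (fun i => ((c i : ZMod 5)) ≠ 0),
          c i * c i := by
        calc (10:ℤ) ≤ ((Finset.univ.filter fun i => ((c i : ZMod 5)) ≠ 0).card : ℤ) := by
              exact_mod_cast hcard
          _ ≤ ∑ i ∈ Finset.univ.filter (fun i => ((c i : ZMod 5)) ≠ 0), c i * c i := by
              simpa using Finset.card_nsmul_le_sum
                (Finset.univ.filter fun i => ((c i : ZMod 5)) ≠ 0)
                (fun i => c i * c i) 1
                (fun i hi => by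
                  simp only [Finset.mem_filter] at hi
                  exact hterm i (fun h => hi.2 (by simp [h])))
      calc (10:ℤ) ≤ _ := h1
        _ ≤ ∑ i, c i * c i :=
          Finset.sum_le_sum_of_subset_of_nonneg (Finset.filter_subset _ _)
            (fun i _ _ => mul_self_nonneg _)
  have hsq : Real.sqrt 5 * Real.sqrt 5 = 5 := Real.mul_self_sqrt (by norm_num)
  have hkeyR : (10:ℝ) ≤ ∑ i, (c i : ℝ) * (c i : ℝ) := by exact_mod_cast key
  calc (2:ℝ) = 10 / 5 := by norm_num
    _ ≤ (∑ i, (c i : ℝ) * (c i : ℝ)) / 5 := by linarith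
    _ = ∑ i, ((c i : ℝ) / Real.sqrt 5) * ((c i : ℝ) / Real.sqrt 5) := by
        rw [Finset.sum_div]
        exact Finset.sum_congr rfl fun i _ => by rw [div_mul_div_comm, hsq]
end

section
/- Let C be a self-dual [24,12,10] code over F5 and let A5(C) = { (1/√5)·c : c ∈ ℤ^24, (c mod 5) ∈ C } ⊆ ℝ^24. Then every vector x ∈ A5(C) with ⟨x,x⟩ = 2 is of the form x = (1/√5)·c where c ∈ ℤ^24 has all entries in {-1, 0, 1} and exactly 10 nonzero entries (and (c mod 5) is a codeword of C of Hamming weight 10). -/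
/-- If `C` is a self-dual `[24,12,10]` code over `𝔽₅`, then every vector of norm `2` in
the Construction A lattice `A₅(C)` is of the form `(1/√5)·c` where `c ∈ ℤ²⁴` has all
entries in `{-1,0,1}` and exactly `10` nonzero entries, and `(c mod 5)` is a codeword
of `C` of Hamming weight `10`. -/
theorem constructionA_norm_two_vectors
    (C : Submodule (ZMod 5) (Fin 24 → ZMod 5))
    (hdim : Module.finrank (ZMod 5) C = 12)
    (hsd : ∀ x : Fin 24 → ZMod 5, x ∈ C ↔ ∀ c ∈ C, ∑ i, x i * c i = 0)
    (hlow : ∀ c ∈ C, c ≠ 0 → 10 ≤ hammingNorm c)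
    (hex : ∃ c ∈ C, c ≠ 0 ∧ hammingNorm c = 10)
    (L : Set (Fin 24 → ℝ))
    (hL : L = {x | ∃ c : Fin 24 → ℤ,
        (fun i => (c i : ZMod 5)) ∈ C ∧ x = fun i => (c i : ℝ) / Real.sqrt 5})
    (x : Fin 24 → ℝ) (hx : x ∈ L) (hnorm : ∑ i, x i * x i = 2) :
    ∃ c : Fin 24 → ℤ,
      (∀ i, c i = -1 ∨ c i = 0 ∨ c i = 1) ∧
      (Finset.univ.filter (fun i => c i ≠ 0)).card = 10 ∧
      (fun i => (c i : ZMod 5)) ∈ C ∧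
      hammingNorm (fun i => (c i : ZMod 5)) = 10 ∧
      x = fun i => (c i : ℝ) / Real.sqrt 5 := by
  subst hL
  obtain ⟨c, hcC, rfl⟩ := hx
  -- The sum of squares of c equals 10
  have h5 : Real.sqrt 5 * Real.sqrt 5 = 5 := Real.mul_self_sqrt (by norm_num)
  have hsR : ∑ i, ((c i : ℝ))^2 = 10 := by
    have h1 : ∑ i, (c i : ℝ) / Real.sqrt 5 * ((c i : ℝ) / Real.sqrt 5) = 2 := hnorm
    have h2 : ∀ i : Fin 24, (c i : ℝ) / Real.sqrt 5 * ((c i : ℝ) / Real.sqrt 5)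
        = (c i : ℝ)^2 / 5 := by
      intro i
      rw [div_mul_div_comm, h5, sq]
    rw [Finset.sum_congr rfl (fun i _ => h2 i), ← Finset.sum_div] at h1
    field_simp at h1
    linarith
  have hsZ : ∑ i, (c i)^2 = (10 : ℤ) := by exact_mod_cast (by push_cast; exact hsR :
    ((∑ i, (c i)^2 : ℤ) : ℝ) = 10)
  have hterm : ∀ i, (c i)^2 ≤ 10 := by
    intro i
    calc (c i)^2 ≤ ∑ j, (c j)^2 :=
      Finset.single_le_sum (f := fun j => (c j)^2) (fun j _ => sq_nonneg _) (Finset.mem_univ i)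
    _ = 10 := hsZ
  have hzero : ∀ i, ((c i : ZMod 5) = 0 ↔ c i = 0) := by
    intro i
    constructor
    · intro h
      by_contra hne
      obtain ⟨k, hk⟩ := (ZMod.intCast_zmod_eq_zero_iff_dvd (c i) 5).1 h
      have hk0 : k ≠ 0 := by rintro rfl; exact hne (by simp [hk])
      have h1 : 1 ≤ |k| := Int.one_le_abs hk0
      have hk2 : 1 ≤ k * k := by
        nlinarith [abs_mul_abs_self k, mul_le_mul h1 h1 (by norm_num) (abs_nonneg k)]
      have : 25 ≤ (c i)^2 := by
        rw [hk]; push_cast; nlinarith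
      linarith [hterm i]
    · intro h; simp [h]
  set S := Finset.univ.filter (fun i => c i ≠ 0) with hS
  have hw : hammingNorm (fun i => (c i : ZMod 5)) = S.card := by
    unfold hammingNorm
    congr 1
    apply Finset.filter_congr
    intro i _
    simp [not_iff_not.2 (hzero i)]
  have hCne : (fun i => ((c i : ZMod 5))) ≠ 0 := by
    intro h
    have : ∀ i, c i = 0 := fun i => (hzero i).1 (congrFun h i)
    simp [this] at hsZ
  have hge : 10 ≤ S.card := hw ▸ hlow _ hcC hCne
  have hsum_filter : ∑ i ∈ S, (c i)^2 = 10 := by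
    rw [← hsZ]
    exact Finset.sum_filter_of_ne (p := fun i => c i ≠ 0)
      (f := fun i => (c i)^2) (fun i _ h h0 => h (by simp [h0]))
  have hone : ∀ i ∈ S, 1 ≤ (c i)^2 := by
    intro i hi
    have : c i ≠ 0 := (Finset.mem_filter.1 hi).2
    have h1 : 1 ≤ |c i| := Int.one_le_abs this
    nlinarith [sq_abs (c i)]
  have hle : (S.card : ℤ) ≤ 10 := by
    calc (S.card : ℤ) = ∑ _i ∈ S, 1 := by simp
    _ ≤ ∑ i ∈ S, (c i)^2 := Finset.sum_le_sum hone
    _ = 10 := hsum_filter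
  have hcard : S.card = 10 := le_antisymm (by exact_mod_cast hle) hge
  have hsq1 : ∀ i ∈ S, (c i)^2 = 1 := by
    have hz : ∑ i ∈ S, ((c i)^2 - 1) = 0 := by
      rw [Finset.sum_sub_distrib, hsum_filter]
      simp [hcard]
    intro i hi
    have := (Finset.sum_eq_zero_iff_of_nonneg (fun j hj => by linarith [hone j hj])).1 hz i hi
    linarith
  refine ⟨c, ?_, hcard, hcC, hw.trans hcard, rfl⟩
  intro i
  by_cases h : c i = 0
  · exact Or.inr (Or.inl h)
  · have hi : i ∈ S := Finset.mem_filter.2 ⟨Finset.mem_univ i, h⟩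
    have hsq := hsq1 i hi
    have hu : IsUnit (c i) := IsUnit.of_mul_eq_one (a := c i) (c i) (by rw [← sq]; exact hsq)
    rcases Int.isUnit_iff.mp hu with h1 | h1
    · exact Or.inr (Or.inr h1)
    · exact Or.inl h1
end

section
/- Let C be a self-dual [24,12,10] code over F5 and let A5(C) = { (1/√5)·c : c ∈ ℤ^24, (c mod 5) ∈ C } ⊆ ℝ^24. Then the map c ↦ (1/√5)·c is a bijection from the set of vectors c ∈ ℤ^24 with all entries in {-1,0,1}, exactly 10 nonzero entries, and (c mod 5) ∈ C, onto the set of vectors of A5(C) of norm 2. In particular, the kissing number of A5(C) (the number of vectors of minimum norm 2) equals the number of codewords of C all of whose coordinates lie in {0, 1, 4} ⊆ F5 and which have Hamming weight 10. -/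
private lemma norm_formula (c : Fin 24 → ℤ) :
    (∑ i, ((c i : ℝ) / Real.sqrt 5) * ((c i : ℝ) / Real.sqrt 5)) =
      ((∑ i, (c i)^2 : ℤ) : ℝ) / 5 := by
  have h5 : (Real.sqrt 5) * (Real.sqrt 5) = 5 := Real.mul_self_sqrt (by norm_num)
  push_cast
  rw [Finset.sum_div]
  apply Finset.sum_congr rfl
  intro i _
  rw [div_mul_div_comm, h5, sq]

private lemma norm_eq_two_iff (c : Fin 24 → ℤ) :
    (∑ i, ((c i : ℝ) / Real.sqrt 5) * ((c i : ℝ) / Real.sqrt 5)) = 2 ↔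
      (∑ i, (c i)^2) = 10 := by
  rw [norm_formula, div_eq_iff (by norm_num : (5:ℝ) ≠ 0)]
  norm_num
  exact_mod_cast Iff.rfl

private lemma cast_eq_zero_of_small {n : ℤ} (h : n^2 ≤ 10) :
    (n : ZMod 5) = 0 ↔ n = 0 := by
  constructor
  · intro hn
    have hd : (5:ℤ) ∣ n := (ZMod.intCast_zmod_eq_zero_iff_dvd n 5).mp hn
    obtain ⟨k, rfl⟩ := hd
    have h1 : k^2 ≤ 0 := by nlinarith
    have h2 : k^2 = 0 := le_antisymm h1 (sq_nonneg k)
    have h3 : k = 0 := by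
      have := sq_eq_zero_iff.mp h2
      exact this
    simp [h3]
  · rintro rfl; simp

/-- Key combinatorial lemma: integer vectors of squared length 10 reducing into the
code have entries in {-1,0,1} with exactly 10 nonzero entries. -/
private lemma key (C : Submodule (ZMod 5) (Fin 24 → ZMod 5))
    (hlow : ∀ c ∈ C, c ≠ 0 → 10 ≤ hammingNorm c)
    (c : Fin 24 → ℤ) (hC : (fun i => (c i : ZMod 5)) ∈ C)
    (hsum : (∑ i, (c i)^2) = 10) :
    (∀ i, c i = -1 ∨ c i = 0 ∨ c i = 1) ∧
      (Finset.univ.filter (fun i => c i ≠ 0)).card = 10 := by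
  have hsq : ∀ i, (c i)^2 ≤ 10 := by
    intro i
    rw [← hsum]
    exact Finset.single_le_sum (fun j _ => sq_nonneg (c j)) (Finset.mem_univ i)
  have hcast : ∀ i, ((c i : ZMod 5) = 0 ↔ c i = 0) :=
    fun i => cast_eq_zero_of_small (hsq i)
  have hne : (fun i => (c i : ZMod 5)) ≠ 0 := by
    intro h0
    have hz : ∀ i, c i = 0 := fun i => (hcast i).mp (congrFun h0 i)
    simp [hz] at hsum
  have hham : hammingNorm (fun i => (c i : ZMod 5)) =
      (Finset.univ.filter (fun i => c i ≠ 0)).card := by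
    unfold hammingNorm
    congr 1
    ext i
    simp [hcast i]
  have h10 : 10 ≤ (Finset.univ.filter (fun i => c i ≠ 0)).card := by
    have := hlow _ hC hne
    rwa [hham] at this
  set s := Finset.univ.filter (fun i : Fin 24 => c i ≠ 0) with hs
  have hsum_s : (∑ i ∈ s, (c i)^2) = 10 := by
    rw [← hsum]
    symm
    apply (Finset.sum_subset (Finset.subset_univ s) _).symm
    intro i _ hi
    simp only [hs, Finset.mem_filter, Finset.mem_univ, true_and, not_not] at hi
    simp [hi]
  have hone : ∀ i ∈ s, 1 ≤ (c i)^2 := by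
    intro i hi
    simp only [hs, Finset.mem_filter] at hi
    rcases hi.2.lt_or_gt with h | h <;> nlinarith
  have hcard_le : (s.card : ℤ) ≤ 10 := by
    calc (s.card : ℤ) = ∑ i ∈ s, 1 := by simp
    _ ≤ ∑ i ∈ s, (c i)^2 := Finset.sum_le_sum hone
    _ = 10 := hsum_s
  have hcard : s.card = 10 := by omega
  have hsq1 : ∀ i ∈ s, (c i)^2 = 1 := by
    intro j hj
    by_contra hne1
    have h2 : 2 ≤ (c j)^2 := by
      have := hone j hj
      omega
    have hlt : (10 : ℤ) < ∑ i ∈ s, (c i)^2 := by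
      rw [← Finset.add_sum_erase s _ hj]
      have h9 : ((s.erase j).card : ℤ) ≤ ∑ i ∈ s.erase j, (c i)^2 := by
        calc ((s.erase j).card : ℤ) = ∑ i ∈ s.erase j, 1 := by simp
        _ ≤ _ := Finset.sum_le_sum (fun i hi => hone i (Finset.mem_of_mem_erase hi))
      have hec : (s.erase j).card = 9 := by rw [Finset.card_erase_of_mem hj, hcard]
      rw [hec] at h9
      push_cast at h9 ⊢
      linarith
    rw [hsum_s] at hlt
    exact absurd hlt (by norm_num)
  refine ⟨fun i => ?_, hcard⟩
  by_cases h0 : c i = 0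
  · right; left; exact h0
  · have hi : i ∈ s := by simp [hs, h0]
    have hm : c i * c i = 1 := by rw [← sq]; exact hsq1 i hi
    rcases mul_self_eq_one_iff.mp hm with h | h
    · right; right; exact h
    · left; exact h

/-- If `C` is a self-dual `[24,12,10]` code over `𝔽₅`, then `c ↦ (1/√5)·c` is a
bijection from the set of `c ∈ ℤ²⁴` with entries in `{-1,0,1}`, exactly `10` nonzero
entries and `(c mod 5) ∈ C`, onto the set of norm-`2` vectors of `A₅(C)`.  In
particular the kissing number of `A₅(C)` equals the number of codewords of `C` with
all coordinates in `{0,1,4}` and Hamming weight `10`. -/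
theorem constructionA_kissing_number
    (C : Submodule (ZMod 5) (Fin 24 → ZMod 5))
    (hdim : Module.finrank (ZMod 5) C = 12)
    (hsd : ∀ x : Fin 24 → ZMod 5, x ∈ C ↔ ∀ c ∈ C, ∑ i, x i * c i = 0)
    (hlow : ∀ c ∈ C, c ≠ 0 → 10 ≤ hammingNorm c)
    (hex : ∃ c ∈ C, c ≠ 0 ∧ hammingNorm c = 10)
    (L : Set (Fin 24 → ℝ))
    (hL : L = {x | ∃ c : Fin 24 → ℤ,
        (fun i => (c i : ZMod 5)) ∈ C ∧ x = fun i => (c i : ℝ) / Real.sqrt 5}) :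
    Set.BijOn (fun (c : Fin 24 → ℤ) => (fun i => (c i : ℝ) / Real.sqrt 5))
      {c : Fin 24 → ℤ | (∀ i, c i = -1 ∨ c i = 0 ∨ c i = 1) ∧
        (Finset.univ.filter (fun i => c i ≠ 0)).card = 10 ∧
        (fun i => (c i : ZMod 5)) ∈ C}
      {x | x ∈ L ∧ ∑ i, x i * x i = 2} ∧
    Set.ncard {x | x ∈ L ∧ ∑ i, x i * x i = 2} =
      Set.ncard {w : Fin 24 → ZMod 5 | w ∈ C ∧
        (∀ i, w i = 0 ∨ w i = 1 ∨ w i = 4) ∧ hammingNorm w = 10} := by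
  subst hL
  set f : (Fin 24 → ℤ) → (Fin 24 → ℝ) :=
    fun c => (fun i => (c i : ℝ) / Real.sqrt 5) with hf
  set S : Set (Fin 24 → ℤ) :=
    {c : Fin 24 → ℤ | (∀ i, c i = -1 ∨ c i = 0 ∨ c i = 1) ∧
        (Finset.univ.filter (fun i => c i ≠ 0)).card = 10 ∧
        (fun i => (c i : ZMod 5)) ∈ C} with hS
  have h5 : Real.sqrt 5 ≠ 0 := by positivity
  have hfinj : Function.Injective f := by
    intro a b hab
    funext i
    have := congrFun hab i
    simp only [hf] at this
    field_simp at this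
    exact_mod_cast this
  have hbij : Set.BijOn f S
      {x | x ∈ {x | ∃ c : Fin 24 → ℤ,
        (fun i => (c i : ZMod 5)) ∈ C ∧ x = fun i => (c i : ℝ) / Real.sqrt 5}
        ∧ ∑ i, x i * x i = 2} := by
    refine ⟨?_, hfinj.injOn, ?_⟩
    · rintro c ⟨h1, h2, h3⟩
      refine ⟨⟨c, h3, rfl⟩, ?_⟩
      rw [show (∑ i, f c i * f c i) =
          ∑ i, ((c i : ℝ) / Real.sqrt 5) * ((c i : ℝ) / Real.sqrt 5) from rfl,
        norm_eq_two_iff]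
      have : ∀ i, (c i)^2 = if c i ≠ 0 then 1 else 0 := by
        intro i
        rcases h1 i with h | h | h <;> simp [h]
      rw [Finset.sum_congr rfl (fun i _ => this i), Finset.sum_boole, h2]
      norm_num
    · rintro x ⟨⟨c, hC, rfl⟩, hx2⟩
      have hsum : (∑ i, (c i)^2) = 10 := (norm_eq_two_iff c).mp hx2
      obtain ⟨h1, h2⟩ := key C hlow c hC hsum
      exact ⟨c, ⟨h1, h2, hC⟩, rfl⟩
  refine ⟨hbij, ?_⟩
  -- counting
  set g : (Fin 24 → ℤ) → (Fin 24 → ZMod 5) := fun c => fun i => (c i : ZMod 5) with hg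
  have hginj : Set.InjOn g S := by
    rintro a ⟨ha, _, _⟩ b ⟨hb, _, _⟩ hab
    funext i
    have hi := congrFun hab i
    simp only [hg] at hi
    rcases ha i with h | h | h <;> rcases hb i with h' | h' | h' <;>
      simp only [h, h'] at hi ⊢ <;> first | rfl | (exfalso; revert hi; decide)
  have himg : g '' S = {w : Fin 24 → ZMod 5 | w ∈ C ∧
      (∀ i, w i = 0 ∨ w i = 1 ∨ w i = 4) ∧ hammingNorm w = 10} := by
    ext w
    constructor
    · rintro ⟨c, ⟨h1, h2, h3⟩, rfl⟩
      refine ⟨h3, fun i => ?_, ?_⟩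
      · rcases h1 i with h | h | h <;> simp [hg, h] <;> decide
      · have : (Finset.univ.filter (fun i => (c i : ZMod 5) ≠ 0)) =
            (Finset.univ.filter (fun i => c i ≠ 0)) := by
          ext i
          simp only [Finset.mem_filter, Finset.mem_univ, true_and]
          rcases h1 i with h | h | h <;> simp [h] <;> decide
        unfold hammingNorm
        simp only [hg]
        rw [this, h2]
    · rintro ⟨hw, hvals, hwt⟩
      set c : Fin 24 → ℤ := fun i => if w i = 1 then 1 else if w i = 4 then -1 else 0
        with hc
      have hcw : (fun i => ((c i : ZMod 5))) = w := by
        funext i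
        rcases hvals i with h | h | h <;> simp only [hc, h] <;> decide
      have hfilt : (Finset.univ.filter (fun i => c i ≠ 0)) =
          (Finset.univ.filter (fun i => w i ≠ 0)) := by
        ext i
        simp only [Finset.mem_filter, Finset.mem_univ, true_and, hc]
        rcases hvals i with h | h | h <;> simp only [h] <;> decide
      refine ⟨c, ⟨?_, ?_, ?_⟩, ?_⟩
      · intro i
        rcases hvals i with h | h | h <;> simp only [hc, h] <;> decide
      · rw [hfilt]
        unfold hammingNorm at hwt
        exact hwt
      · rw [hcw]
        exact hw
      · exact hcw
  calc Set.ncard {x | x ∈ {x | ∃ c : Fin 24 → ℤ,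
        (fun i => (c i : ZMod 5)) ∈ C ∧ x = fun i => (c i : ℝ) / Real.sqrt 5}
        ∧ ∑ i, x i * x i = 2}
      = Set.ncard (f '' S) := by rw [hbij.image_eq]
    _ = Set.ncard S := Set.ncard_image_of_injOn hfinj.injOn
    _ = Set.ncard (g '' S) := (Set.ncard_image_of_injOn hginj).symm
    _ = _ := by rw [himg]
end

section
/- Let C be a self-dual [24,12,10] code over F5, let L = A5(C) = { (1/√5)·c : c ∈ ℤ^24, (c mod 5) ∈ C } ⊆ ℝ^24, and suppose L = L1 + L2 where L1 and L2 are additive subgroups of ℝ^24 with ⟨a,b⟩ = 0 for all a ∈ L1 and b ∈ L2, L1 ∩ L2 = {0}, and every nonzero vector of L1 and of L2 has norm at least 2. Then for each i ∈ {1,…,24}, the vector √5·e_i (where e_i is the i-th standard unit vector of ℝ^24) belongs to L1 or to L2. -/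
lemma key_contra (C : Submodule (ZMod 5) (Fin 24 → ZMod 5))
    (hlow : ∀ c ∈ C, c ≠ 0 → 10 ≤ hammingNorm c)
    (c : Fin 24 → ℤ) (hcC : (fun j => ((c j : ZMod 5))) ∈ C)
    (i : Fin 24) (hne : c ≠ 0)
    (hN : ∑ j, (c j) ^ 2 = 5 * c i) (h2 : 2 ≤ c i) (h3 : c i ≤ 3) : False := by
  have hnonneg : ∀ j ∈ Finset.univ, (0:ℤ) ≤ (c j)^2 := fun j _ => sq_nonneg _
  have hbound : ∀ j, (c j)^2 ≤ 15 := by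
    intro j
    have := Finset.single_le_sum hnonneg (Finset.mem_univ j)
    omega
  -- the codeword is nonzero
  have hcw : (fun j => ((c j : ZMod 5))) ≠ 0 := by
    intro h
    apply hne
    funext j
    have hj : ((c j : ZMod 5)) = 0 := congrFun h j
    have : (5:ℤ) ∣ c j := by
      rwa [ZMod.intCast_zmod_eq_zero_iff_dvd] at hj
    have hb := hbound j
    obtain ⟨k, hk⟩ := this
    have hk2 : c j ^ 2 = 25 * k ^ 2 := by rw [hk]; ring
    have hk0 : k = 0 := by
      by_contra h0
      have h1 : 1 ≤ k^2 := by nlinarith [Int.one_le_abs h0, sq_abs k]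
      linarith
    simp only [Pi.zero_apply]; omega
  have hham := hlow _ hcC hcw
  -- S = support
  set S : Finset (Fin 24) := Finset.univ.filter (fun j => ((c j : ZMod 5)) ≠ 0) with hS
  have hcard : 10 ≤ S.card := hham
  have hiS : i ∈ S := by
    simp only [hS, Finset.mem_filter, Finset.mem_univ, true_and]
    interval_cases h : c i <;> simp_all <;> decide
  have hterm : ∀ j ∈ S.erase i, (1:ℤ) ≤ (c j)^2 := by
    intro j hj
    have hj' : ((c j : ZMod 5)) ≠ 0 := by
      have := Finset.mem_of_mem_erase hj
      simp only [hS, Finset.mem_filter] at this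
      exact this.2
    have : c j ≠ 0 := by
      intro h; apply hj'; rw [h]; simp
    nlinarith [Int.one_le_abs this, sq_abs (c j)]
  have hsub : ∑ j ∈ S, (c j)^2 ≤ ∑ j, (c j)^2 :=
    Finset.sum_le_sum_of_subset_of_nonneg (Finset.subset_univ S)
      (fun j _ _ => sq_nonneg _)
  have hsplit : ∑ j ∈ S, (c j)^2 = (c i)^2 + ∑ j ∈ S.erase i, (c j)^2 :=
    (Finset.add_sum_erase S _ hiS).symm
  have herase : (9:ℤ) ≤ ∑ j ∈ S.erase i, (c j)^2 := by
    calc (9:ℤ) ≤ (S.erase i).card := by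
          have := Finset.card_erase_of_mem hiS
          omega
      _ = ∑ j ∈ S.erase i, (1:ℤ) := by simp
      _ ≤ ∑ j ∈ S.erase i, (c j)^2 := Finset.sum_le_sum hterm
  nlinarith



/-- Let `C` be a self-dual `[24,12,10]` code over `𝔽₅` and let `L = A₅(C)`.
Suppose `L = L₁ + L₂` with `L₁, L₂` orthogonal additive subgroups of `ℝ²⁴`
intersecting trivially, each of whose nonzero vectors has norm at least `2`.
Then each `√5·eᵢ` belongs to `L₁` or to `L₂`. -/
theorem sqrt_five_unit_vectors_in_summand
    (C : Submodule (ZMod 5) (Fin 24 → ZMod 5))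
    (hdim : Module.finrank (ZMod 5) C = 12)
    (hsd : ∀ x : Fin 24 → ZMod 5, x ∈ C ↔ ∀ c ∈ C, ∑ i, x i * c i = 0)
    (hlow : ∀ c ∈ C, c ≠ 0 → 10 ≤ hammingNorm c)
    (hex : ∃ c ∈ C, c ≠ 0 ∧ hammingNorm c = 10)
    (L : Set (Fin 24 → ℝ))
    (hL : L = {x | ∃ c : Fin 24 → ℤ,
        (fun i => (c i : ZMod 5)) ∈ C ∧ x = fun i => (c i : ℝ) / Real.sqrt 5})
    (L1 L2 : AddSubgroup (Fin 24 → ℝ))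
    (hsum : ∀ x : Fin 24 → ℝ, x ∈ L ↔ ∃ a ∈ L1, ∃ b ∈ L2, x = a + b)
    (horth : ∀ a ∈ L1, ∀ b ∈ L2, ∑ i, a i * b i = 0)
    (hint : ∀ x : Fin 24 → ℝ, x ∈ L1 → x ∈ L2 → x = 0)
    (hmin1 : ∀ a ∈ L1, a ≠ 0 → 2 ≤ ∑ i, a i * a i)
    (hmin2 : ∀ b ∈ L2, b ≠ 0 → 2 ≤ ∑ i, b i * b i) :
    ∀ i : Fin 24,
      (fun j => if j = i then Real.sqrt 5 else 0) ∈ L1 ∨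
      (fun j => if j = i then Real.sqrt 5 else 0) ∈ L2 := by
  intro i
  set e : Fin 24 → ℝ := fun j => if j = i then Real.sqrt 5 else 0 with he
  have hs5 : Real.sqrt 5 * Real.sqrt 5 = 5 := Real.mul_self_sqrt (by norm_num)
  have hs5ne : Real.sqrt 5 ≠ 0 := by positivity
  have hemem : e ∈ L := by
    rw [hL]
    refine ⟨fun j => if j = i then 5 else 0, ?_, ?_⟩
    · have h0 : (fun j => (((if j = i then (5:ℤ) else 0) : ℤ) : ZMod 5)) = 0 := by
        funext j; by_cases h : j = i <;> simp [h] <;> decide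
      exact h0 ▸ C.zero_mem
    · funext j
      simp only [he]
      by_cases h : j = i
      · rw [if_pos h, if_pos h, eq_div_iff hs5ne]
        push_cast
        linarith
      · rw [if_neg h, if_neg h]
        simp
  obtain ⟨a, ha, b, hb, hab⟩ := (hsum e).1 hemem
  by_cases ha0 : a = 0
  · right
    have : e = b := by rw [hab, ha0, zero_add]
    rw [this]; exact hb
  by_cases hb0 : b = 0
  · left
    have : e = a := by rw [hab, hb0, add_zero]
    rw [this]; exact ha
  exfalso
  have horth' : ∑ j, a j * b j = 0 := horth a ha b hb
  have horth'' : ∑ j, b j * a j = 0 := by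
    rw [← horth']; exact Finset.sum_congr rfl fun j _ => mul_comm _ _
  have hee : ∑ j, e j * e j = 5 := by
    rw [he]
    rw [Finset.sum_eq_single i]
    · simp [hs5]
    · intro j _ hj; simp [hj]
    · simp
  have hexp : ∑ j, e j * e j =
      (∑ j, a j * a j) + (∑ j, b j * b j) + (∑ j, a j * b j) + (∑ j, b j * a j) := by
    rw [hab]
    rw [← Finset.sum_add_distrib, ← Finset.sum_add_distrib, ← Finset.sum_add_distrib]
    exact Finset.sum_congr rfl fun j _ => by simp [Pi.add_apply]; ring
  have hnormsum : (∑ j, a j * a j) + (∑ j, b j * b j) = 5 := by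
    rw [hexp, horth', horth''] at hee; linarith
  -- ⟨a, e⟩ = √5 * a i  and equals ‖a‖²
  have hae : ∑ j, a j * e j = a i * Real.sqrt 5 := by
    rw [he, Finset.sum_eq_single i]
    · simp
    · intro j _ hj; simp [hj]
    · simp
  have haa : ∑ j, a j * a j = a i * Real.sqrt 5 := by
    have : ∑ j, a j * e j = (∑ j, a j * a j) + (∑ j, a j * b j) := by
      rw [hab, ← Finset.sum_add_distrib]
      exact Finset.sum_congr rfl fun j _ => by simp [Pi.add_apply]; ring
    rw [hae] at this
    linarith [horth', this]
  -- bounds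
  have h2a := hmin1 a ha ha0
  have h2b := hmin2 b hb hb0
  have hle3 : ∑ j, a j * a j ≤ 3 := by linarith
  -- a ∈ L
  have haL : a ∈ L := (hsum a).2 ⟨a, ha, 0, L2.zero_mem, by simp⟩
  rw [hL] at haL
  obtain ⟨c, hcC, hac⟩ := haL
  have hacj : ∀ j, a j = (c j : ℝ) / Real.sqrt 5 := fun j => congrFun hac j
  have hsum_a : ∑ j, a j * a j = ((∑ j, (c j)^2 : ℤ) : ℝ) / 5 := by
    push_cast
    rw [Finset.sum_div]
    refine Finset.sum_congr rfl fun j _ => ?_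
    rw [hacj j]
    field_simp
    have h5 : Real.sqrt 5 ^ 2 = 5 := by rw [sq]; exact hs5
    linear_combination (-(c j : ℝ)^2) * h5
  have hai5 : a i * Real.sqrt 5 = (c i : ℝ) := by
    rw [hacj i]
    field_simp
  -- integer equation
  have hNr : ((∑ j, (c j)^2 : ℤ) : ℝ) = ((5 * c i : ℤ) : ℝ) := by
    have := haa
    rw [hsum_a, hai5] at this
    push_cast at this ⊢
    linarith
  have hN : ∑ j, (c j)^2 = 5 * c i := by exact_mod_cast hNr
  have hci2 : (2:ℤ) ≤ c i := by
    have : (2:ℝ) ≤ (c i : ℝ) := by rw [← hai5, ← haa]; exact h2a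
    exact_mod_cast this
  have hci3 : c i ≤ (3:ℤ) := by
    have : (c i : ℝ) ≤ 3 := by rw [← hai5, ← haa]; exact hle3
    exact_mod_cast this
  have hcne : c ≠ 0 := by
    intro h
    apply ha0
    funext j
    rw [hacj j, h]
    simp
  exact key_contra C hlow c hcC i hcne hN hci2 hci3
end

section
/- Let C be a self-dual [24,12,10] code over F5, let L = A5(C) = { (1/√5)·c : c ∈ ℤ^24, (c mod 5) ∈ C } ⊆ ℝ^24, and suppose L = L1 + L2 where L1 and L2 are additive subgroups of ℝ^24 with ⟨a,b⟩ = 0 for all a ∈ L1 and b ∈ L2, L1 ∩ L2 = {0}, √5·e_i ∈ L1 for i = 1,…,12, and √5·e_i ∈ L2 for i = 13,…,24. Then C is decomposable as a direct sum of two codes of length 12: for every c ∈ ℤ^24, (c mod 5) ∈ C if and only if ((c_1,…,c_12,0,…,0) mod 5) ∈ C and ((0,…,0,c_13,…,c_24) mod 5) ∈ C. Moreover, the length-12 codes C1 = { (c_1,…,c_12) mod 5 : (1/√5)(c_1,…,c_12,0,…,0) ∈ L1 } and C2 = { (c_13,…,c_24) mod 5 : (1/√5)(0,…,0,c_13,…,c_24)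 ∈ L2 } are both self-dual. -/
/-- Let `C` be a self-dual `[24,12,10]` code over `𝔽₅`, `L = A₅(C)`, and suppose
`L = L₁ + L₂` with `L₁, L₂` orthogonal additive subgroups of `ℝ²⁴` intersecting
trivially, `√5·eᵢ ∈ L₁` for `i = 1,…,12` and `√5·eᵢ ∈ L₂` for `i = 13,…,24`.
Then `C` decomposes as the direct sum of two length-12 codes, and the length-12
codes `C₁`, `C₂` obtained from `L₁`, `L₂` are both self-dual. -/
theorem code_decomposes_into_self_dual_length_12_codes
    (C : Submodule (ZMod 5) (Fin 24 → ZMod 5))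
    (hdim : Module.finrank (ZMod 5) C = 12)
    (hsd : ∀ x : Fin 24 → ZMod 5, x ∈ C ↔ ∀ c ∈ C, ∑ i, x i * c i = 0)
    (hlow : ∀ c ∈ C, c ≠ 0 → 10 ≤ hammingNorm c)
    (hex : ∃ c ∈ C, c ≠ 0 ∧ hammingNorm c = 10)
    (L : Set (Fin 24 → ℝ))
    (hL : L = {x | ∃ c : Fin 24 → ℤ,
        (fun i => (c i : ZMod 5)) ∈ C ∧ x = fun i => (c i : ℝ) / Real.sqrt 5})
    (L1 L2 : AddSubgroup (Fin 24 → ℝ))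
    (hsum : ∀ x : Fin 24 → ℝ, x ∈ L ↔ ∃ a ∈ L1, ∃ b ∈ L2, x = a + b)
    (horth : ∀ a ∈ L1, ∀ b ∈ L2, ∑ i, a i * b i = 0)
    (hint : ∀ x : Fin 24 → ℝ, x ∈ L1 → x ∈ L2 → x = 0)
    (he1 : ∀ i : Fin 24, i.val < 12 →
      (fun j => if j = i then Real.sqrt 5 else 0) ∈ L1)
    (he2 : ∀ i : Fin 24, 12 ≤ i.val →
      (fun j => if j = i then Real.sqrt 5 else 0) ∈ L2)
    (C1 : Set (Fin 12 → ZMod 5))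
    (hC1 : C1 = {w | ∃ c : Fin 12 → ℤ, w = (fun i => (c i : ZMod 5)) ∧
      (fun j : Fin 24 => if h : j.val < 12
        then (c ⟨j.val, h⟩ : ℝ) / Real.sqrt 5 else 0) ∈ L1})
    (C2 : Set (Fin 12 → ZMod 5))
    (hC2 : C2 = {w | ∃ c : Fin 12 → ℤ, w = (fun i => (c i : ZMod 5)) ∧
      (fun j : Fin 24 => if j.val < 12 then 0
        else (c ⟨j.val - 12, by have := j.isLt; omega⟩ : ℝ) / Real.sqrt 5) ∈ L2}) :
    -- `C` is decomposable into the direct sum of two codes of length 12: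
    (∀ c : Fin 24 → ℤ,
      (fun i => (c i : ZMod 5)) ∈ C ↔
        ((fun i : Fin 24 => if i.val < 12 then (c i : ZMod 5) else 0) ∈ C ∧
         (fun i : Fin 24 => if i.val < 12 then 0 else (c i : ZMod 5)) ∈ C)) ∧
    -- `C₁` is self-dual:
    C1 = {x | ∀ w ∈ C1, ∑ i, x i * w i = 0} ∧
    -- `C₂` is self-dual:
    C2 = {x | ∀ w ∈ C2, ∑ i, x i * w i = 0} := by
  have s5pos : (0:ℝ) < Real.sqrt 5 := Real.sqrt_pos.mpr (by norm_num)
  have s5ne : Real.sqrt 5 ≠ 0 := ne_of_gt s5pos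
  have hdivinj : ∀ (m n : ℤ), (m:ℝ)/Real.sqrt 5 = (n:ℝ)/Real.sqrt 5 → m = n := by
    intro m n h
    field_simp at h
    exact_mod_cast h
  have hdiv0 : ∀ (m : ℤ), (m:ℝ)/Real.sqrt 5 = 0 → m = 0 := by
    intro m h
    rcases div_eq_zero_iff.mp h with h' | h'
    · exact_mod_cast h'
    · exact absurd h' s5ne
  have hvalcast : ∀ x : ZMod 5, (((x.val : ℤ)) : ZMod 5) = x := by
    intro x; push_cast; simp [ZMod.natCast_val, ZMod.cast_id]
  have hsplit : ∀ f : Fin 24 → ZMod 5, ∑ i, f i =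
      (∑ i : Fin 12, f ⟨i.val, by omega⟩) + ∑ i : Fin 12, f ⟨i.val + 12, by omega⟩ := by
    intro f
    have h1 : ∑ i : Fin 24, f i = ∑ i : Fin (12+12), f (finCongr (by norm_num) i) :=
      (Fintype.sum_equiv (finCongr (by norm_num)) _ _ (fun i => rfl)).symm
    rw [h1, Fin.sum_univ_add]
    congr 1
  -- coordinates of L1 elements vanish on the last 12 coordinates
  have h1 : ∀ a ∈ L1, ∀ i : Fin 24, 12 ≤ i.val → a i = 0 := by
    intro a ha i hi
    have h0 := horth a ha _ (he2 i hi)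
    have hs : ∑ j, a j * (if j = i then Real.sqrt 5 else 0) = a i * Real.sqrt 5 := by
      rw [Finset.sum_eq_single i]
      · simp
      · intro b _ hb; simp [hb]
      · simp
    rw [hs] at h0
    exact (mul_eq_zero.mp h0).resolve_right s5ne
  have h2 : ∀ b ∈ L2, ∀ i : Fin 24, i.val < 12 → b i = 0 := by
    intro b hb i hi
    have h0 := horth _ (he1 i hi) b hb
    have hs : ∑ j, (if j = i then Real.sqrt 5 else 0) * b j = Real.sqrt 5 * b i := by
      rw [Finset.sum_eq_single i]
      · simp
      · intro c _ hc; simp [hc]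
      · simp
    rw [hs] at h0
    exact (mul_eq_zero.mp h0).resolve_left s5ne
  -- decomposition of lattice vectors
  have hdec : ∀ c : Fin 24 → ℤ, (fun i => (c i : ZMod 5)) ∈ C →
      ((fun j : Fin 24 => if j.val < 12 then (c j : ℝ)/Real.sqrt 5 else 0) ∈ L1 ∧
       (fun j : Fin 24 => if j.val < 12 then 0 else (c j : ℝ)/Real.sqrt 5) ∈ L2) := by
    intro c hc
    have hx : (fun i => (c i : ℝ)/Real.sqrt 5) ∈ L := by
      rw [hL]; exact ⟨c, hc, rfl⟩
    obtain ⟨a, ha, b, hb, hab⟩ := (hsum _).mp hx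
    have hA : (fun j : Fin 24 => if j.val < 12 then (c j : ℝ)/Real.sqrt 5 else 0) = a := by
      funext j
      by_cases hj : j.val < 12
      · have hbj : b j = 0 := h2 b hb j hj
        have h := congrFun hab j
        simp only [Pi.add_apply, hbj, add_zero] at h
        simp [hj, h]
      · simp [hj, h1 a ha j (by omega)]
    have hB : (fun j : Fin 24 => if j.val < 12 then 0 else (c j : ℝ)/Real.sqrt 5) = b := by
      funext j
      by_cases hj : j.val < 12
      · simp [hj, h2 b hb j hj]
      · have haj : a j = 0 := h1 a ha j (by omega)
        have h := congrFun hab j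
        simp only [Pi.add_apply, haj, zero_add] at h
        simp [hj, h]
    exact ⟨hA ▸ ha, hB ▸ hb⟩
  -- elements of L1 come from integer vectors supported on the first 12 coords
  have hL1L : ∀ a ∈ L1, ∃ e : Fin 24 → ℤ, (fun i => (e i : ZMod 5)) ∈ C ∧
      (∀ j : Fin 24, 12 ≤ j.val → e j = 0) ∧ a = fun i => (e i : ℝ)/Real.sqrt 5 := by
    intro a ha
    have hmem : a ∈ L := (hsum a).mpr ⟨a, ha, 0, L2.zero_mem, (add_zero a).symm⟩
    rw [hL] at hmem
    obtain ⟨e, he, hae⟩ := hmem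
    refine ⟨e, he, ?_, hae⟩
    intro j hj
    have h0 : a j = 0 := h1 a ha j hj
    have := congrFun hae j
    rw [h0] at this
    exact hdiv0 _ this.symm
  have hL2L : ∀ b ∈ L2, ∃ e : Fin 24 → ℤ, (fun i => (e i : ZMod 5)) ∈ C ∧
      (∀ j : Fin 24, j.val < 12 → e j = 0) ∧ b = fun i => (e i : ℝ)/Real.sqrt 5 := by
    intro b hb
    have hmem : b ∈ L := (hsum b).mpr ⟨0, L1.zero_mem, b, hb, (zero_add b).symm⟩
    rw [hL] at hmem
    obtain ⟨e, he, hbe⟩ := hmem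
    refine ⟨e, he, ?_, hbe⟩
    intro j hj
    have h0 : b j = 0 := h2 b hb j hj
    have := congrFun hbe j
    rw [h0] at this
    exact hdiv0 _ this.symm
  -- Part 1: the decomposition of C
  have part1 : ∀ c : Fin 24 → ℤ,
      (fun i => (c i : ZMod 5)) ∈ C ↔
        ((fun i : Fin 24 => if i.val < 12 then (c i : ZMod 5) else 0) ∈ C ∧
         (fun i : Fin 24 => if i.val < 12 then 0 else (c i : ZMod 5)) ∈ C) := by
    intro c
    constructor
    · intro hc
      obtain ⟨ha, hb⟩ := hdec c hc
      obtain ⟨e, he, he0, hae⟩ := hL1L _ ha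
      obtain ⟨f, hf, hf0, hbf⟩ := hL2L _ hb
      constructor
      · have heq : (fun i : Fin 24 => if i.val < 12 then (c i : ZMod 5) else 0)
            = fun i => (e i : ZMod 5) := by
          funext j
          by_cases hj : j.val < 12
          · have := congrFun hae j
            simp only [hj, if_true] at this
            have := hdivinj _ _ this
            simp [hj, this]
          · simp [hj, he0 j (by omega)]
        rw [heq]; exact he
      · have heq : (fun i : Fin 24 => if i.val < 12 then 0 else (c i : ZMod 5))
            = fun i => (f i : ZMod 5) := by
          funext j
          by_cases hj : j.val < 12
          · simp [hj, hf0 j hj]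
          · have := congrFun hbf j
            simp only [hj, if_false] at this
            have := hdivinj _ _ this
            simp [hj, this]
        rw [heq]; exact hf
    · rintro ⟨h1', h2'⟩
      have := C.add_mem h1' h2'
      have heq : (fun i => (c i : ZMod 5)) =
          ((fun i : Fin 24 => if i.val < 12 then (c i : ZMod 5) else 0) +
           (fun i : Fin 24 => if i.val < 12 then 0 else (c i : ZMod 5))) := by
        funext j
        by_cases hj : j.val < 12 <;> simp [hj]
      rw [heq]; exact this
  -- first/second halves of codewords belong to C1/C2
  have hfirst : ∀ d, d ∈ C → (fun i : Fin 12 => d ⟨i.val, by omega⟩) ∈ C1 := by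
    intro d hd
    set c : Fin 24 → ℤ := fun i => ((d i).val : ℤ) with hcdef
    have hc : (fun i => (c i : ZMod 5)) = d := by
      funext i; exact hvalcast (d i)
    have hmem := (hdec c (by rw [hc]; exact hd)).1
    rw [hC1]
    refine ⟨fun i => c ⟨i.val, by omega⟩, ?_, ?_⟩
    · funext i
      exact (hvalcast _).symm
    · have heq : (fun j : Fin 24 => if h : j.val < 12
          then ((fun i : Fin 12 => c ⟨i.val, by omega⟩) ⟨j.val, h⟩ : ℝ) / Real.sqrt 5 else 0)
          = fun j : Fin 24 => if j.val < 12 then (c j : ℝ)/Real.sqrt 5 else 0 := by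
        funext j
        by_cases hj : j.val < 12 <;> simp [hj]
      rw [heq]; exact hmem
  have hsecond : ∀ d, d ∈ C → (fun i : Fin 12 => d ⟨i.val + 12, by omega⟩) ∈ C2 := by
    intro d hd
    set c : Fin 24 → ℤ := fun i => ((d i).val : ℤ) with hcdef
    have hc : (fun i => (c i : ZMod 5)) = d := by
      funext i; exact hvalcast (d i)
    have hmem := (hdec c (by rw [hc]; exact hd)).2
    rw [hC2]
    refine ⟨fun i => c ⟨i.val + 12, by omega⟩, ?_, ?_⟩
    · funext i
      exact (hvalcast _).symm
    · have heq : (fun j : Fin 24 => if j.val < 12 then 0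
          else ((fun i : Fin 12 => c ⟨i.val + 12, by omega⟩)
            ⟨j.val - 12, by have := j.isLt; omega⟩ : ℝ) / Real.sqrt 5)
          = fun j : Fin 24 => if j.val < 12 then 0 else (c j : ℝ)/Real.sqrt 5 := by
        funext j
        by_cases hj : j.val < 12
        · simp [hj]
        · have hfin : (⟨j.val - 12 + 12, by have := j.isLt; omega⟩ : Fin 24) = j :=
            Fin.ext (by simp; omega)
          simp only [hj, if_false]
          rw [hfin]
      rw [heq]; exact hmem
  refine ⟨part1, ?_, ?_⟩
  -- C1 self-dual
  · ext x
    constructor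
    · intro hx w hw
      rw [hC1] at hx hw
      obtain ⟨cx, hxc, hxl⟩ := hx
      obtain ⟨cw, hwc, hwl⟩ := hw
      obtain ⟨e, he, he0, hae⟩ := hL1L _ hxl
      obtain ⟨f, hf, hf0, hbf⟩ := hL1L _ hwl
      have hex' : ∀ i : Fin 12, e ⟨i.val, by omega⟩ = cx i := by
        intro i
        have := congrFun hae ⟨i.val, by omega⟩
        simp only [i.isLt, dif_pos] at this
        exact (hdivinj _ _ this).symm
      have hfw' : ∀ i : Fin 12, f ⟨i.val, by omega⟩ = cw i := by
        intro i
        have := congrFun hbf ⟨i.val, by omega⟩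
        simp only [i.isLt, dif_pos] at this
        exact (hdivinj _ _ this).symm
      have hsum0 : ∑ i, (e i : ZMod 5) * (f i : ZMod 5) = 0 := (hsd _).mp he _ hf
      rw [hsplit] at hsum0
      have hz : ∑ i : Fin 12, ((e ⟨i.val + 12, by omega⟩ : ZMod 5) *
          (f ⟨i.val + 12, by omega⟩ : ZMod 5)) = 0 := by
        apply Finset.sum_eq_zero
        intro i _
        rw [he0 _ (by simp)]
        simp
      rw [hz, add_zero] at hsum0
      calc ∑ i, x i * w i = ∑ i : Fin 12, (e ⟨i.val, by omega⟩ : ZMod 5) *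
            (f ⟨i.val, by omega⟩ : ZMod 5) := by
            apply Finset.sum_congr rfl
            intro i _
            rw [hex' i, hfw' i, hxc, hwc]
        _ = 0 := hsum0
    · intro hx
      simp only [Set.mem_setOf_eq] at hx
      set cx : Fin 12 → ℤ := fun i => ((x i).val : ℤ) with hcxdef
      set ct : Fin 24 → ℤ := fun j => if h : j.val < 12 then cx ⟨j.val, h⟩ else 0 with hctdef
      have hctC : (fun i => (ct i : ZMod 5)) ∈ C := by
        rw [hsd]
        intro d hd
        rw [hsplit]
        have hz : ∑ i : Fin 12, ((ct ⟨i.val + 12, by omega⟩ : ZMod 5) *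
            d ⟨i.val + 12, by omega⟩) = 0 := by
          apply Finset.sum_eq_zero
          intro i _
          have : ct ⟨i.val + 12, by omega⟩ = 0 := by simp [hctdef]
          rw [this]; simp
        rw [hz, add_zero]
        have := hx _ (hfirst d hd)
        calc ∑ i : Fin 12, ((ct ⟨i.val, by omega⟩ : ZMod 5) * d ⟨i.val, by omega⟩)
            = ∑ i : Fin 12, x i * d ⟨i.val, by omega⟩ := by
              apply Finset.sum_congr rfl
              intro i _
              congr 1
              simp only [hctdef, hcxdef]
              rw [dif_pos i.isLt]
              exact hvalcast (x i)
          _ = 0 := this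
      have hmem := (hdec ct hctC).1
      rw [hC1]
      refine ⟨cx, ?_, ?_⟩
      · funext i; exact (hvalcast _).symm
      · have heq : (fun j : Fin 24 => if h : j.val < 12
            then (cx ⟨j.val, h⟩ : ℝ) / Real.sqrt 5 else 0)
            = fun j : Fin 24 => if j.val < 12 then (ct j : ℝ)/Real.sqrt 5 else 0 := by
          funext j
          by_cases hj : j.val < 12 <;> simp [hj, hctdef]
        rw [heq]; exact hmem
  -- C2 self-dual
  · ext x
    constructor
    · intro hx w hw
      rw [hC2] at hx hw
      obtain ⟨cx, hxc, hxl⟩ := hx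
      obtain ⟨cw, hwc, hwl⟩ := hw
      obtain ⟨e, he, he0, hae⟩ := hL2L _ hxl
      obtain ⟨f, hf, hf0, hbf⟩ := hL2L _ hwl
      have hex' : ∀ i : Fin 12, e ⟨i.val + 12, by omega⟩ = cx i := by
        intro i
        have := congrFun hae ⟨i.val + 12, by omega⟩
        have hni : ¬ ((i.val + 12) < 12) := by omega
        simp only [hni, if_false] at this
        have hfin : (⟨i.val + 12 - 12, by omega⟩ : Fin 12) = i := Fin.ext (by simp)
        rw [hfin] at this
        exact (hdivinj _ _ this).symm
      have hfw' : ∀ i : Fin 12, f ⟨i.val + 12, by omega⟩ = cw i := by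
        intro i
        have := congrFun hbf ⟨i.val + 12, by omega⟩
        have hni : ¬ ((i.val + 12) < 12) := by omega
        simp only [hni, if_false] at this
        have hfin : (⟨i.val + 12 - 12, by omega⟩ : Fin 12) = i := Fin.ext (by simp)
        rw [hfin] at this
        exact (hdivinj _ _ this).symm
      have hsum0 : ∑ i, (e i : ZMod 5) * (f i : ZMod 5) = 0 := (hsd _).mp he _ hf
      rw [hsplit] at hsum0
      have hz : ∑ i : Fin 12, ((e ⟨i.val, by omega⟩ : ZMod 5) *
          (f ⟨i.val, by omega⟩ : ZMod 5)) = 0 := by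
        apply Finset.sum_eq_zero
        intro i _
        rw [he0 _ (by simp [i.isLt])]
        simp
      rw [hz, zero_add] at hsum0
      calc ∑ i, x i * w i = ∑ i : Fin 12, (e ⟨i.val + 12, by omega⟩ : ZMod 5) *
            (f ⟨i.val + 12, by omega⟩ : ZMod 5) := by
            apply Finset.sum_congr rfl
            intro i _
            rw [hex' i, hfw' i, hxc, hwc]
        _ = 0 := hsum0
    · intro hx
      simp only [Set.mem_setOf_eq] at hx
      set cx : Fin 12 → ℤ := fun i => ((x i).val : ℤ) with hcxdef
      set ct : Fin 24 → ℤ := fun j => if h : j.val < 12 then 0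
        else cx ⟨j.val - 12, by have := j.isLt; omega⟩ with hctdef
      have hctC : (fun i => (ct i : ZMod 5)) ∈ C := by
        rw [hsd]
        intro d hd
        rw [hsplit]
        have hz : ∑ i : Fin 12, ((ct ⟨i.val, by omega⟩ : ZMod 5) *
            d ⟨i.val, by omega⟩) = 0 := by
          apply Finset.sum_eq_zero
          intro i _
          have : ct ⟨i.val, by omega⟩ = 0 := by simp [hctdef, i.isLt]
          rw [this]; simp
        rw [hz, zero_add]
        have := hx _ (hsecond d hd)
        calc ∑ i : Fin 12, ((ct ⟨i.val + 12, by omega⟩ : ZMod 5) * d ⟨i.val + 12, by omega⟩)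
            = ∑ i : Fin 12, x i * d ⟨i.val + 12, by omega⟩ := by
              apply Finset.sum_congr rfl
              intro i _
              congr 1
              have hni : ¬ ((i.val + 12) < 12) := by omega
              simp only [hctdef, hcxdef]
              rw [dif_neg hni]
              have hfin : (⟨i.val + 12 - 12, by omega⟩ : Fin 12) = i := Fin.ext (by simp)
              rw [hfin]
              exact hvalcast (x i)
          _ = 0 := this
      have hmem := (hdec ct hctC).2
      rw [hC2]
      refine ⟨cx, ?_, ?_⟩
      · funext i; exact (hvalcast _).symm
      · have heq : (fun j : Fin 24 => if j.val < 12 then 0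
            else (cx ⟨j.val - 12, by have := j.isLt; omega⟩ : ℝ) / Real.sqrt 5)
            = fun j : Fin 24 => if j.val < 12 then 0 else (ct j : ℝ)/Real.sqrt 5 := by
          funext j
          by_cases hj : j.val < 12 <;> simp [hj, hctdef]
        rw [heq]; exact hmem
end

section
/- There exists no self-dual code of length 12 over F5 whose minimum Hamming weight is at least 10. That is, every self-dual code C ⊆ (F5)^12 contains a nonzero codeword of Hamming weight at most 9. -/
open LinearMap (BilinForm)
open Module

noncomputable def dotB : BilinForm (ZMod 5) (Fin 12 → ZMod 5) :=
  LinearMap.mk₂ (ZMod 5) (fun x y => ∑ i, x i * y i)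
    (by intros; simp [add_mul, Finset.sum_add_distrib])
    (by intros; simp [Finset.mul_sum, mul_assoc, mul_left_comm])
    (by intros; simp [mul_add, Finset.sum_add_distrib])
    (by intros; simp [Finset.mul_sum, mul_left_comm])

lemma dotB_apply (x y : Fin 12 → ZMod 5) : dotB x y = ∑ i, x i * y i := rfl

lemma dotB_comm (x y : Fin 12 → ZMod 5) : dotB x y = dotB y x := by
  rw [dotB_apply, dotB_apply]; exact Finset.sum_congr rfl fun i _ => mul_comm _ _

lemma dotB_refl : dotB.IsRefl := by
  intro x y h; rw [dotB_comm]; exact h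

lemma dotB_nondeg : dotB.Nondegenerate := by
  refine ⟨?_, ?_⟩ <;> intro x h <;>
  · funext i
    have := h (Pi.single i 1)
    rw [dotB_apply] at this
    simpa [Pi.single_apply, Finset.sum_ite_eq'] using this

/-- There exists no self-dual code of length 12 over `𝔽₅` with minimum Hamming
weight at least 10: every self-dual `C ⊆ (𝔽₅)¹²` contains a nonzero codeword of
Hamming weight at most 9. -/
theorem self_dual_length_12_F5_min_weight_le_nine
    (C : Submodule (ZMod 5) (Fin 12 → ZMod 5))
    (hsd : ∀ x : Fin 12 → ZMod 5, x ∈ C ↔ ∀ c ∈ C, ∑ i, x i * c i = 0) :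
    ∃ c ∈ C, c ≠ 0 ∧ hammingNorm c ≤ 9 := by
  haveI : Fact (Nat.Prime 5) := ⟨by norm_num⟩
  -- C equals its orthogonal complement
  have horth : dotB.orthogonal C = C := by
    ext x
    rw [LinearMap.BilinForm.mem_orthogonal_iff, hsd]
    constructor
    · intro h c hc
      have := h c hc
      rw [dotB_comm, dotB_apply] at this
      exact this
    · intro h c hc
      rw [dotB_comm, dotB_apply]
      exact h c hc
  -- dimension count: finrank C = 6
  have hdim12 : finrank (ZMod 5) (Fin 12 → ZMod 5) = 12 := Module.finrank_fin_fun (ZMod 5)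
  have h1 := LinearMap.BilinForm.finrank_orthogonal dotB_nondeg C
  rw [horth, hdim12] at h1
  have hle : finrank (ZMod 5) C ≤ 12 := by
    have := Submodule.finrank_le C
    omega
  have hdim : finrank (ZMod 5) C = 6 := by omega
  -- project to first three coordinates
  let π : C →ₗ[ZMod 5] (Fin 3 → ZMod 5) :=
    { toFun := fun c j => (c : Fin 12 → ZMod 5) (Fin.castLE (by norm_num) j)
      map_add' := by intros; rfl
      map_smul' := by intros; rfl }
  have hker : LinearMap.ker π ≠ ⊥ := by
    intro hbot
    have hinj : Function.Injective π := LinearMap.ker_eq_bot.mp hbot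
    have := LinearMap.finrank_le_finrank_of_injective hinj
    rw [hdim] at this
    simp [Module.finrank_pi] at this
  obtain ⟨c, hc, hc0⟩ := Submodule.exists_mem_ne_zero_of_ne_bot hker
  refine ⟨(c : Fin 12 → ZMod 5), c.2, ?_, ?_⟩
  · intro h
    exact hc0 (Subtype.ext h)
  · have hzero : ∀ j : Fin 3, (c : Fin 12 → ZMod 5) (Fin.castLE (by norm_num) j) = 0 := by
      intro j
      have : π c = 0 := hc
      exact congrFun this j
    have hsub : (Finset.univ.filter fun i => (c : Fin 12 → ZMod 5) i ≠ 0) ⊆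
        Finset.univ \ {(0 : Fin 12), 1, 2} := by
      intro i hi
      simp only [Finset.mem_filter] at hi
      simp only [Finset.mem_sdiff, Finset.mem_univ, true_and, Finset.mem_insert,
        Finset.mem_singleton]
      rintro (rfl | rfl | rfl)
      · exact hi.2 (hzero 0)
      · exact hi.2 (hzero 1)
      · exact hi.2 (hzero 2)
    calc hammingNorm (c : Fin 12 → ZMod 5)
        = (Finset.univ.filter fun i => (c : Fin 12 → ZMod 5) i ≠ 0).card := rfl
      _ ≤ (Finset.univ \ {(0 : Fin 12), 1, 2}).card := Finset.card_le_card hsub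
      _ ≤ 9 := by decide
end
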